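/- Let X and Y be topological spaces with Y sober. Suppose F : Opens(Y) → Opens(X) is a map on open-set lattices that preserves finite infima (including the top element) and arbitrary suprema. Then there is a unique continuous map f : X → Y with F(U) = f⁻¹(U) for all open U ⊆ Y. -/
import Mathlib


open TopologicalSpace

theorem exists_unique_continuous_map_of_frame_hom
    {X Y : Type*} [TopologicalSpace X] [TopologicalSpace Y]
    [QuasiSober Y] [T0Space Y]
    (F : Opens Y → Opens X)
    (htop : F ⊤ = ⊤)
    (hinf : ∀ U V : Opens Y, F (U ⊓ V) = F U ⊓ F V)
    (hsup : ∀ s : Set (Opens Y), F (sSup s) = sSup (F '' s)) :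
    ∃! f : X → Y, Continuous f ∧ ∀ U : Opens Y, (F U : Set X) = f ⁻¹' (U : Set Y) := by
  have hmono : ∀ U V : Opens Y, U ≤ V → F U ≤ F V := by
    intro U V h
    have : U ⊓ V = U := inf_eq_left.mpr h
    calc F U = F (U ⊓ V) := by rw [this]
      _ = F U ⊓ F V := hinf U V
      _ ≤ F V := inf_le_right
  -- Key existence of pointwise images
  have key : ∀ x : X, ∃ y : Y, ∀ U : Opens Y, x ∈ F U ↔ y ∈ U := by
    intro x
    set s : Set (Opens Y) := {U | x ∉ F U} with hs
    set V : Opens Y := sSup s with hV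
    have hxV : x ∉ F V := by
      intro hx
      rw [hV, hsup] at hx
      rw [Opens.mem_sSup] at hx
      obtain ⟨W, ⟨U, hUs, rfl⟩, hxW⟩ := hx
      exact hUs hxW
    set Z : Set Y := (V : Set Y)ᶜ with hZ
    have hmeet : ∀ U : Opens Y, (Z ∩ (U : Set Y)).Nonempty ↔ x ∈ F U := by
      intro U
      constructor
      · intro ⟨z, hzZ, hzU⟩
        by_contra hxU
        have : U ≤ V := le_sSup hxU
        exact hzZ (this hzU)
      · intro hxU
        rw [Set.nonempty_iff_ne_empty]
        intro hempty
        have hle : (U : Set Y) ⊆ (V : Set Y) := by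
          intro z hz
          by_contra hzV
          exact (Set.eq_empty_iff_forall_notMem.mp hempty z) ⟨hzV, hz⟩
        exact hxV (hmono U V hle hxU)
    have hne : Z.Nonempty := by
      rw [← Set.univ_inter Z, Set.inter_comm]
      exact (hmeet ⊤).mpr (htop ▸ trivial)
    have hpre : IsPreirreducible Z := by
      intro u v hu hv ⟨a, haZ, hau⟩ ⟨b, hbZ, hbv⟩
      have h1 : x ∈ F ⟨u, hu⟩ := (hmeet ⟨u, hu⟩).mp ⟨a, haZ, hau⟩
      have h2 : x ∈ F ⟨v, hv⟩ := (hmeet ⟨v, hv⟩).mp ⟨b, hbZ, hbv⟩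
      have h3 : x ∈ F (⟨u, hu⟩ ⊓ ⟨v, hv⟩) := by
        rw [hinf]; exact ⟨h1, h2⟩
      obtain ⟨z, hz1, hz2⟩ := (hmeet (⟨u, hu⟩ ⊓ ⟨v, hv⟩)).mpr h3
      exact ⟨z, hz1, hz2⟩
    have hclosed : IsClosed Z := isClosed_compl_iff.mpr V.2
    obtain ⟨y, hy⟩ := QuasiSober.sober ⟨hne, hpre⟩ hclosed
    refine ⟨y, fun U => ?_⟩
    have hyZ : y ∈ Z := hy ▸ subset_closure rfl
    rw [← hmeet U]
    constructor
    · intro ⟨z, hzZ, hzU⟩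
      have : z ∈ closure {y} := hy.symm ▸ hzZ
      obtain ⟨w, hw1, hw2⟩ := mem_closure_iff.mp this U U.2 hzU
      rwa [hw2] at hw1
    · intro hyU
      exact ⟨y, hyZ, hyU⟩
  choose f hf using key
  have hF : ∀ U : Opens Y, (F U : Set X) = f ⁻¹' (U : Set Y) := by
    intro U
    ext x
    exact hf x U
  have hcont : Continuous f := by
    rw [continuous_def]
    intro u hu
    have h := hF ⟨u, hu⟩
    have : f ⁻¹' u = (F ⟨u, hu⟩ : Set X) := h.symm
    rw [this]
    exact (F ⟨u, hu⟩).2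
  refine ⟨f, ⟨hcont, hF⟩, ?_⟩
  rintro g ⟨hgc, hgF⟩
  funext x
  refine (T0Space.t0 ?_).symm
  rw [inseparable_iff_forall_isOpen]
  intro u hu
  have h1 : (F ⟨u, hu⟩ : Set X) = f ⁻¹' u := hF ⟨u, hu⟩
  have h2 : (F ⟨u, hu⟩ : Set X) = g ⁻¹' u := hgF ⟨u, hu⟩
  constructor
  · intro h
    have : x ∈ g ⁻¹' u := h2 ▸ (h1.symm ▸ h : x ∈ (F ⟨u, hu⟩ : Set X))
    exact this
  · intro h
    have : x ∈ f ⁻¹' u := h1 ▸ (h2.symm ▸ h : x ∈ (F ⟨u, hu⟩ : Set X))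
    exact this
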